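/- (Non-solvability of ASR gives channel mixture decomposition.) Let M = e^{τQ} be a q × q reversible transition matrix with stationary distribution π and suppose the q rows of the r-step leaf distribution μ^{r,i} (the distribution of leaf states of an r-level homogeneous tree given root state i) satisfy: there exists δ ∈ (0,1) and probability measures ν̄, ν'^i with μ^{r,i} = (1-δ)ν̄ + δ ν'^i for all i. Then on an ℓ-level tree (ℓ > r), the leaf distribution μ^{ℓ,i} can be sampled by first running the process to level ℓ - r, independently erasing each level-(ℓ-r) state to * with probability 1-δ, and then filling in each subtree below a *-node from ν̄ and below a node labelled j from ν'^j; consequently μ^{ℓ,i} equals the corresponding mixture over erasure patterns. -/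

import Mathlib

/-- Joint distribution of the `2^ℓ` leaf states of an `ℓ`-level homogeneous
(complete binary) tree with transition matrix `M` on every edge, conditioned on
the root being in state `i`. -/
noncomputable def leafDist {q : ℕ} (M : Matrix (Fin q) (Fin q) ℝ) :
    (ℓ : ℕ) → Fin q → (Fin (2 ^ ℓ) → Fin q) → ℝ
  | 0, i, f => if f ⟨0, by positivity⟩ = i then 1 else 0
  | ℓ + 1, i, f =>
    ∑ j : Fin q, ∑ j' : Fin q,
      M i j * M i j' *
        leafDist M ℓ j (fun x => f ⟨x.1, by
          have hx := x.2
          have h : 2 ^ ℓ ≤ 2 ^ (ℓ + 1) := Nat.pow_le_pow_right (by norm_num) (Nat.le_succ ℓ)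
          omega⟩) *
        leafDist M ℓ j' (fun x => f ⟨2 ^ ℓ + x.1, by
          have hx := x.2
          have h : 2 ^ (ℓ + 1) = 2 ^ ℓ * 2 := pow_succ 2 ℓ
          omega⟩)

/-- The leaves of the `t`-th level-`a` subtree of an `(a+r)`-level tree. -/
def restr {q : ℕ} (a r : ℕ) (f : Fin (2 ^ (a + r)) → Fin q) (t : Fin (2 ^ a)) :
    Fin (2 ^ r) → Fin q :=
  fun x => f ⟨t.1 * 2 ^ r + x.1, by
    have hx := x.2
    have ht : t.1 + 1 ≤ 2 ^ a := t.2
    calc t.1 * 2 ^ r + x.1 < t.1 * 2 ^ r + 2 ^ r := by omega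
      _ = (t.1 + 1) * 2 ^ r := by ring
      _ ≤ 2 ^ a * 2 ^ r := Nat.mul_le_mul_right _ ht
      _ = 2 ^ (a + r) := (pow_add 2 a r).symm⟩

lemma leafDist_congr {q : ℕ} (M : Matrix (Fin q) (Fin q) ℝ) {ℓ ℓ' : ℕ} (h : ℓ = ℓ')
    (i : Fin q) (f : Fin (2 ^ ℓ) → Fin q) (f' : Fin (2 ^ ℓ') → Fin q)
    (hf : ∀ (n : ℕ) (h1 : n < 2 ^ ℓ) (h2 : n < 2 ^ ℓ'), f ⟨n, h1⟩ = f' ⟨n, h2⟩) :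
    leafDist M ℓ i f = leafDist M ℓ' i f' := by
  subst h
  have : f = f' := by funext x; exact hf x.1 x.2 x.2
  rw [this]

private lemma two_pow_succ (a : ℕ) : 2 ^ (a + 1) = 2 ^ a + 2 ^ a := by rw [pow_succ]; ring

def mergeFun {q a : ℕ} (g₁ g₂ : Fin (2 ^ a) → Fin q) : Fin (2 ^ (a + 1)) → Fin q :=
  fun x => if h : x.1 < 2 ^ a then g₁ ⟨x.1, h⟩ else g₂ ⟨x.1 - 2 ^ a, by
    have := x.2; have h2 := two_pow_succ a; omega⟩

def mergeEquiv (q a : ℕ) :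
    ((Fin (2 ^ a) → Fin q) × (Fin (2 ^ a) → Fin q)) ≃ (Fin (2 ^ (a + 1)) → Fin q) where
  toFun p := mergeFun p.1 p.2
  invFun g := (fun t => g ⟨t.1, by have := t.2; have h2 := two_pow_succ a; omega⟩,
               fun t => g ⟨2 ^ a + t.1, by have := t.2; have h2 := two_pow_succ a; omega⟩)
  left_inv p := by
    ext t
    · simp [mergeFun, t.2]
    · have h : ¬ (2 ^ a + t.1 < 2 ^ a) := by omega
      simp [mergeFun, h]
  right_inv g := by
    funext x
    by_cases h : x.1 < 2 ^ a
    · simp only [mergeFun, dif_pos h]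
    · simp only [mergeFun, dif_neg h]
      congr 1
      refine Fin.ext ?_
      simp only
      omega

private lemma prod_split {N n : ℕ} (hN : N = n + n) (H : Fin N → ℝ) :
    ∏ t, H t = (∏ t : Fin n, H ⟨t.1, by omega⟩) * ∏ t : Fin n, H ⟨n + t.1, by omega⟩ := by
  subst hN
  rw [Fin.prod_univ_add]
  rfl

private lemma prod_one {N : ℕ} (hN : N = 1) (H : Fin N → ℝ) :
    ∏ t, H t = H ⟨0, by omega⟩ := by
  subst hN
  exact Fin.prod_univ_one H

private lemma sum_fun_one {q N : ℕ} (hN : N = 1) (F : (Fin N → Fin q) → ℝ) :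
    ∑ g, F g = ∑ j : Fin q, F (fun _ => j) := by
  subst hN
  rw [← Equiv.sum_comp (Equiv.funUnique (Fin 1) (Fin q)).symm]
  rfl

private lemma sum4 {α β γ η : Type*} [Fintype α] [Fintype β] [Fintype γ] [Fintype η]
    (T : α → β → γ → η → ℝ) :
    ∑ a, ∑ b, ∑ c, ∑ d, T a b c d = ∑ c, ∑ d, ∑ a, ∑ b, T a b c d := by
  calc ∑ a, ∑ b, ∑ c, ∑ d, T a b c d
      = ∑ a, ∑ c, ∑ b, ∑ d, T a b c d :=
        Finset.sum_congr rfl fun a _ => Finset.sum_comm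
    _ = ∑ c, ∑ a, ∑ b, ∑ d, T a b c d := Finset.sum_comm
    _ = ∑ c, ∑ a, ∑ d, ∑ b, T a b c d :=
        Finset.sum_congr rfl fun c _ => Finset.sum_congr rfl fun a _ => Finset.sum_comm
    _ = ∑ c, ∑ d, ∑ a, ∑ b, T a b c d :=
        Finset.sum_congr rfl fun c _ => Finset.sum_comm

private lemma mul_sum_sum {α β : Type*} [Fintype α] [Fintype β] (c : ℝ)
    (A : α → ℝ) (B : β → ℝ) :
    c * (∑ x, A x) * (∑ y, B y) = ∑ x, ∑ y, c * A x * B y := by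
  simp only [Finset.mul_sum, Finset.sum_mul]
  exact Finset.sum_comm

lemma leafDist_merge {q a : ℕ} (M : Matrix (Fin q) (Fin q) ℝ) (i : Fin q)
    (g₁ g₂ : Fin (2 ^ a) → Fin q) :
    leafDist M (a + 1) i (mergeFun g₁ g₂) =
      ∑ j : Fin q, ∑ j' : Fin q,
        M i j * M i j' * leafDist M a j g₁ * leafDist M a j' g₂ := by
  rw [leafDist]
  congr 1; funext j; congr 1; funext j'
  congr 2
  · congr 1
    funext x
    simp only [mergeFun, dif_pos x.2]
  · funext x
    have h : ¬ (2 ^ a + x.1 < 2 ^ a) := by omega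
    simp only [mergeFun, dif_neg h]
    congr 1
    exact Fin.ext (by simp)

lemma leafDist_comp {q : ℕ} (M : Matrix (Fin q) (Fin q) ℝ) :
    ∀ (a r : ℕ) (i : Fin q) (f : Fin (2 ^ (a + r)) → Fin q),
      leafDist M (a + r) i f =
        ∑ g : Fin (2 ^ a) → Fin q,
          leafDist M a i g * ∏ t : Fin (2 ^ a), leafDist M r (g t) (restr a r f t) := by
  intro a
  induction a with
  | zero =>
    intro r i f
    have hL : leafDist M (0 + r) i f = leafDist M r i (restr 0 r f ⟨0, Nat.one_pos⟩) := by
      refine leafDist_congr M (Nat.zero_add r) i f _ ?_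
      intro n h1 h2
      simp only [restr]
      congr 1
      exact Fin.ext (by simp)
    rw [hL, sum_fun_one (pow_zero 2)]
    have h0 : ∀ j : Fin q,
        leafDist M 0 i (fun _ : Fin (2 ^ 0) => j) = if j = i then 1 else 0 := by
      intro j; rw [leafDist]
    simp only [h0]
    have h1 : ∀ j : Fin q,
        (∏ t : Fin (2 ^ 0), leafDist M r ((fun _ => j) t) (restr 0 r f t)) =
          leafDist M r j (restr 0 r f ⟨0, Nat.one_pos⟩) := by
      intro j
      rw [prod_one (pow_zero 2)]
    simp only [h1]
    rw [Finset.sum_congr rfl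
      (fun j _ => (ite_mul _ _ _ _).trans (by rw [one_mul, zero_mul]))]
    rw [Finset.sum_ite_eq' Finset.univ i
      (fun j => leafDist M r j (restr 0 r f ⟨0, Nat.one_pos⟩))]
    simp
  | succ a IH =>
    intro r i f
    have hL : (a + 1) + r = (a + r) + 1 := by omega
    -- transported function and its halves
    set F : Fin (2 ^ ((a + r) + 1)) → Fin q := fun x => f ⟨x.1, by
      have := x.2; have h : 2 ^ ((a+r)+1) = 2 ^ ((a+1)+r) := by rw [hL]
      omega⟩ with hF
    set FL : Fin (2 ^ (a + r)) → Fin q := fun x => F ⟨x.1, by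
      have := x.2
      have h : 2 ^ (a+r) ≤ 2 ^ ((a+r)+1) := Nat.pow_le_pow_right (by norm_num) (Nat.le_succ _)
      omega⟩ with hFL
    set FR : Fin (2 ^ (a + r)) → Fin q := fun x => F ⟨2 ^ (a+r) + x.1, by
      have := x.2
      have h : 2 ^ ((a+r)+1) = 2 ^ (a+r) * 2 := pow_succ 2 (a+r)
      omega⟩ with hFR
    have lhs1 : leafDist M ((a + 1) + r) i f = leafDist M ((a + r) + 1) i F :=
      leafDist_congr M hL i f F (fun n h1 h2 => rfl)
    have lhs2 : leafDist M ((a + r) + 1) i F =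
        ∑ j : Fin q, ∑ j' : Fin q,
          M i j * M i j' * leafDist M (a + r) j FL * leafDist M (a + r) j' FR := by
      rw [leafDist]
    have hres1 : ∀ (t : Fin (2 ^ a)),
        restr (a + 1) r f ⟨t.1, by have := t.2; have h2 := two_pow_succ a; omega⟩
          = restr a r FL t := by
      intro t
      funext x
      simp only [restr, hFL, hF]
    have hres2 : ∀ (t : Fin (2 ^ a)),
        restr (a + 1) r f ⟨2 ^ a + t.1, by have := t.2; have h2 := two_pow_succ a; omega⟩
          = restr a r FR t := by
      intro t
      funext x
      simp only [restr, hFR, hF]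
      congr 1
      refine Fin.ext ?_
      simp only
      rw [add_mul, pow_add]
      ring
    rw [lhs1, lhs2]
    rw [← Equiv.sum_comp (mergeEquiv q a), Fintype.sum_prod_type]
    have key : ∀ g₁ g₂ : Fin (2 ^ a) → Fin q,
        leafDist M (a + 1) i (mergeEquiv q a (g₁, g₂)) *
            ∏ t : Fin (2 ^ (a + 1)),
              leafDist M r ((mergeEquiv q a (g₁, g₂)) t) (restr (a + 1) r f t)
          = ∑ j : Fin q, ∑ j' : Fin q,
              (M i j * M i j' * leafDist M a j g₁ * leafDist M a j' g₂) *
                ((∏ t : Fin (2 ^ a), leafDist M r (g₁ t) (restr a r FL t)) *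
                 (∏ t : Fin (2 ^ a), leafDist M r (g₂ t) (restr a r FR t))) := by
      intro g₁ g₂
      have hmain :
          leafDist M (a + 1) i (mergeEquiv q a (g₁, g₂)) *
              ∏ t : Fin (2 ^ (a + 1)),
                leafDist M r ((mergeEquiv q a (g₁, g₂)) t) (restr (a + 1) r f t)
            = (∑ j : Fin q, ∑ j' : Fin q,
                M i j * M i j' * leafDist M a j g₁ * leafDist M a j' g₂) *
              ((∏ t : Fin (2 ^ a), leafDist M r (g₁ t) (restr a r FL t)) *
               (∏ t : Fin (2 ^ a), leafDist M r (g₂ t) (restr a r FR t))) := by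
        congr 1
        · exact leafDist_merge M i g₁ g₂
        · rw [prod_split (two_pow_succ a)]
          congr 1
          · refine Finset.prod_congr rfl fun t _ => ?_
            rw [← hres1 t]
            congr 1
            show mergeFun g₁ g₂ _ = g₁ t
            simp only [mergeFun, dif_pos t.2]
          · refine Finset.prod_congr rfl fun t _ => ?_
            rw [← hres2 t]
            congr 1
            show mergeFun g₁ g₂ _ = g₂ t
            have h : ¬ (2 ^ a + t.1 < 2 ^ a) := by omega
            simp only [mergeFun, dif_neg h]
            congr 1
            exact Fin.ext (by simp)
      rw [hmain, Finset.sum_mul]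
      exact Finset.sum_congr rfl fun j _ => by rw [Finset.sum_mul]
    simp only [key]
    -- now both sides are 4-fold sums; reorder
    have expand : ∀ (j j' : Fin q),
        M i j * M i j' * leafDist M (a + r) j FL * leafDist M (a + r) j' FR
          = ∑ g₁ : Fin (2 ^ a) → Fin q, ∑ g₂ : Fin (2 ^ a) → Fin q,
              (M i j * M i j' * leafDist M a j g₁ * leafDist M a j' g₂) *
                ((∏ t : Fin (2 ^ a), leafDist M r (g₁ t) (restr a r FL t)) *
                 (∏ t : Fin (2 ^ a), leafDist M r (g₂ t) (restr a r FR t))) := by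
      intro j j'
      rw [IH r j FL, IH r j' FR]
      rw [mul_sum_sum]
      exact Finset.sum_congr rfl fun g₁ _ => Finset.sum_congr rfl fun g₂ _ => by ring
    simp only [expand]
    exact sum4 _


/-- Non-solvability of ancestral reconstruction gives a channel mixture
decomposition: if the `r`-level leaf distributions of the homogeneous tree with
edge matrix `M = e^{τQ}` (Q reversible w.r.t. `π`) decompose as
`μ^{r,i} = (1-δ)ν̄ + δ ν'^i`, then the `ℓ = (a+r)`-level leaf distribution can
be sampled by running the process to level `a`, erasing each level-`a` state
with probability `1-δ` (filling its subtree from `ν̄`) and otherwise filling the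
subtree below a node labelled `j` from `ν'^j`; i.e. `μ^{ℓ,i}` equals the
corresponding mixture over erasure patterns. -/
theorem stmt16 (q : ℕ) (hq : 2 ≤ q) (τ : ℝ) (hτ : 0 < τ)
    (Q : Matrix (Fin q) (Fin q) ℝ) (π : Fin q → ℝ)
    (hπ : ∀ i, 0 < π i) (hrev : ∀ i j, π i * Q i j = π j * Q j i)
    (hrate : ∀ i, ∑ j, Q i j = 0) (hoff : ∀ i j, i ≠ j → 0 < Q i j)
    (M : Matrix (Fin q) (Fin q) ℝ) (hM : M = NormedSpace.exp (τ • Q))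
    (r a : ℕ) (ha : 1 ≤ a)
    (δ : ℝ) (hδ0 : 0 < δ) (hδ1 : δ < 1)
    (νbar : (Fin (2 ^ r) → Fin q) → ℝ) (ν' : Fin q → (Fin (2 ^ r) → Fin q) → ℝ)
    (hνbar0 : ∀ f, 0 ≤ νbar f) (hνbar1 : ∑ f, νbar f = 1)
    (hν'0 : ∀ i f, 0 ≤ ν' i f) (hν'1 : ∀ i, ∑ f, ν' i f = 1)
    (hdecomp : ∀ i f, leafDist M r i f = (1 - δ) * νbar f + δ * ν' i f) :
    ∀ (i : Fin q) (f : Fin (2 ^ (a + r)) → Fin q),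
      leafDist M (a + r) i f =
        ∑ g : Fin (2 ^ a) → Fin q,
          leafDist M a i g *
            ∏ t : Fin (2 ^ a),
              ((1 - δ) * νbar (restr a r f t) + δ * ν' (g t) (restr a r f t)) := by
  intro i f
  simp only [← hdecomp]
  exact leafDist_comp M a r i f
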